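/- The double semion F-symbols define a nontrivial cohomology class: the function F : G³ → U(1) on G = ℤ/2 × ℤ/2 given by F(a,b,c) = -1 when a,b,c ∈ {S,S̄} and 1 otherwise is a 3-cocycle that is not a coboundary, i.e., there is no function χ : G² → U(1) with F(a,b,c) = χ(b,c)·χ(a,bc)/(χ(ab,c)·χ(a,b)) for all a,b,c. -/

import Mathlib

/-- In `G = ℤ/2 × ℤ/2`, the semion `S = (1,0)`. -/
def dsS : ZMod 2 × ZMod 2 := (1, 0)

/-- The anti-semion `S̄ = (1,1)`. -/
def dsSbar : ZMod 2 × ZMod 2 := (1, 1)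

/-- The double semion F-symbols: `-1` if all three arguments lie in `{S, S̄}`,
and `1` otherwise. -/
noncomputable def dsF (a b c : ZMod 2 × ZMod 2) : ℂ :=
  if (a = dsS ∨ a = dsSbar) ∧ (b = dsS ∨ b = dsSbar) ∧ (c = dsS ∨ c = dsSbar)
  then -1 else 1

/-- Indicator: `1` if the first coordinate is `1`, else `0`. -/
def dsn (x : ZMod 2 × ZMod 2) : ℕ := if x.1 = 1 then 1 else 0

lemma ds_mem_iff (x : ZMod 2 × ZMod 2) : (x = dsS ∨ x = dsSbar) ↔ x.1 = 1 := by
  revert x; decide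

lemma dsF_eq (a b c : ZMod 2 × ZMod 2) :
    dsF a b c = (-1 : ℂ) ^ (dsn a * dsn b * dsn c) := by
  unfold dsF dsn
  by_cases ha : a.1 = 1 <;> by_cases hb : b.1 = 1 <;> by_cases hc : c.1 = 1 <;>
    simp [ds_mem_iff, ha, hb, hc]

lemma ds_parity : ∀ a b c d : ZMod 2 × ZMod 2,
    (dsn a * dsn b * dsn c + dsn a * dsn (b+c) * dsn d + dsn b * dsn c * dsn d) % 2
    = (dsn (a+b) * dsn c * dsn d + dsn a * dsn b * dsn (c+d)) % 2 := by decide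

lemma dsn_S : dsn dsS = 1 := rfl
lemma dsn_0 : dsn 0 = 0 := rfl
lemma dsF_SS0 : dsF dsS dsS 0 = 1 := by
  rw [dsF_eq, dsn_S, dsn_0]; norm_num
lemma dsF_0SS : dsF 0 dsS dsS = 1 := by
  rw [dsF_eq, dsn_S, dsn_0]; norm_num
lemma dsF_SSS : dsF dsS dsS dsS = -1 := by
  rw [dsF_eq, dsn_S]; norm_num

/-- The double semion F-symbols form a 3-cocycle on `ℤ/2 × ℤ/2` that is not
the coboundary of any `χ : G² → U(1)`: they define a nontrivial cohomology
class. -/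
theorem stmt10 :
    (∀ a b c d : ZMod 2 × ZMod 2,
      dsF a b c * dsF a (b + c) d * dsF b c d =
        dsF (a + b) c d * dsF a b (c + d)) ∧
    ¬ ∃ χ : (ZMod 2 × ZMod 2) → (ZMod 2 × ZMod 2) → ℂ,
        (∀ a b, ‖χ a b‖ = 1) ∧
        (∀ a b c : ZMod 2 × ZMod 2,
          dsF a b c = χ b c * χ a (b + c) / (χ (a + b) c * χ a b)) := by
  constructor
  · intro a b c d
    simp only [dsF_eq, ← pow_add]
    rw [neg_one_pow_eq_pow_mod_two, ds_parity, ← neg_one_pow_eq_pow_mod_two]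
  · rintro ⟨χ, habs, hχ⟩
    have hne : ∀ a b, χ a b ≠ 0 := by
      intro a b h
      have := habs a b
      rw [h] at this
      simp at this
    -- abbreviations
    have hSS0 := hχ dsS dsS 0
    have h0SS := hχ 0 dsS dsS
    have hSSS := hχ dsS dsS dsS
    have hS2 : dsS + dsS = (0 : ZMod 2 × ZMod 2) := by decide
    rw [dsF_SS0, hS2, add_zero] at hSS0
    rw [dsF_0SS, hS2, zero_add] at h0SS
    rw [dsF_SSS, hS2] at hSSS
    -- hSS0 : 1 = χ S 0 * χ S S / (χ 0 0 * χ S S)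
    -- h0SS : 1 = χ S S * χ 0 0 / (χ S S * χ 0 S)
    -- hSSS : -1 = χ S S * χ S 0 / (χ 0 S * χ S S)
    rw [eq_div_iff (mul_ne_zero (hne _ _) (hne _ _))] at hSS0 h0SS hSSS
    have e1 : χ dsS 0 * χ dsS dsS = χ 0 0 * χ dsS dsS := by linear_combination -hSS0
    have e2 : χ dsS dsS * χ 0 0 = χ dsS dsS * χ 0 dsS := by linear_combination -h0SS
    have e3 : χ dsS dsS * χ dsS 0 = -(χ 0 dsS * χ dsS dsS) := by linear_combination -hSSS
    have h1 : χ dsS 0 = χ 0 0 := mul_right_cancel₀ (hne _ _) e1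
    have h2 : χ 0 0 = χ 0 dsS := mul_left_cancel₀ (hne _ _) e2
    have h3 : χ dsS 0 = -χ 0 dsS := by
      have := mul_left_cancel₀ (hne dsS dsS) (by linear_combination e3 :
        χ dsS dsS * χ dsS 0 = χ dsS dsS * (-χ 0 dsS))
      exact this
    have hthis : χ 0 dsS = -χ 0 dsS := by
      conv_lhs => rw [← h2, ← h1]
      exact h3
    exact hne 0 dsS (by linear_combination hthis * (1/2 : ℂ))
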